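/- Let G be an edge-ordered bigraph that avoids P_6^{+13254}. Then the spanning subgraph G_l of G formed by its left inclined edges avoids P_5^{-2143}. -/

import Mathlib

set_option maxHeartbeats 1000000

/-- An edge-ordered graph: a finite simple graph together with an injective
real labeling of its edges (inducing a linear order on the edge set). -/
structure EOGraph (V : Type) [Fintype V] where
  graph : SimpleGraph V
  label : Sym2 V → ℝ
  inj : ∀ e ∈ graph.edgeSet, ∀ f ∈ graph.edgeSet, label e = label f → e = f

/-- `G` contains `H`: an injective, adjacency-preserving, edge-order-respecting map. -/
def EOContains {V W : Type} [Fintype V] [Fintype W] (G : EOGraph V) (H : EOGraph W) : Prop :=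
  ∃ f : W → V, Function.Injective f ∧
    (∀ a b, H.graph.Adj a b → G.graph.Adj (f a) (f b)) ∧
    ∀ e ∈ H.graph.edgeSet, ∀ e' ∈ H.graph.edgeSet,
      H.label e < H.label e' → G.label (Sym2.map f e) < G.label (Sym2.map f e')

/-- The Turán number `ex_<(n, H)`: the maximum number of edges of an
edge-ordered graph on `n` vertices avoiding `H`. -/
noncomputable def exLT {W : Type} [Fintype W] (n : ℕ) (H : EOGraph W) : ℕ :=
  sSup {m | ∃ G : EOGraph (Fin n), ¬ EOContains G H ∧ G.graph.edgeSet.ncard = m}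

/-- The reverse of an edge-ordered graph: same graph, reversed edge order. -/
def EOGraph.reverse {V : Type} [Fintype V] (G : EOGraph V) : EOGraph V where
  graph := G.graph
  label := fun e => - G.label e
  inj := fun e he f hf h => G.inj e he f hf (neg_inj.mp h)

/-- Two edges (as elements of `Sym2 V`) are adjacent if they share a vertex. -/
def EdgesAdjacent {V : Type} (e f : Sym2 V) : Prop := ∃ v, v ∈ e ∧ v ∈ f

/-- `e` and `f` are consecutive edges of `G`: `e < f` with no edge strictly in between. -/
def Consecutive {V : Type} [Fintype V] (G : EOGraph V) (e f : Sym2 V) : Prop :=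
  e ∈ G.graph.edgeSet ∧ f ∈ G.graph.edgeSet ∧ G.label e < G.label f ∧
    ¬ ∃ g ∈ G.graph.edgeSet, G.label e < G.label g ∧ G.label g < G.label f

/-- A semi-caterpillar: the underlying graph is a tree with at least one edge, and any
pair of consecutive edges is adjacent or directly connected by an edge larger than both. -/
def IsSemiCaterpillar {V : Type} [Fintype V] (G : EOGraph V) : Prop :=
  G.graph.IsTree ∧ G.graph.edgeSet.Nonempty ∧
  ∀ e f, Consecutive G e f →
    EdgesAdjacent e f ∨
    ∃ u v, s(u, v) ∈ G.graph.edgeSet ∧ u ∈ e ∧ v ∈ f ∧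
      G.label e < G.label s(u, v) ∧ G.label f < G.label s(u, v)

/-- The order chromatic number of `G` is at most `k`: there is a simple graph `H` with
chromatic number at most `k` all of whose edge-orderings contain `G`. -/
def OrderChromAtMost {V : Type} [Fintype V] (G : EOGraph V) (k : ℕ) : Prop :=
  ∃ (m : ℕ) (H : SimpleGraph (Fin m)), H.chromaticNumber ≤ (k : ℕ∞) ∧
    ∀ K : EOGraph (Fin m), K.graph = H → EOContains K G

/-- The order chromatic number of `G` equals 2. -/
def HasOrderChrom2 {V : Type} [Fintype V] (G : EOGraph V) : Prop :=
  OrderChromAtMost G 2 ∧ ¬ OrderChromAtMost G 1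

/-- A vertex is close if the edges incident to it form an interval in the edge order. -/
def CloseVertex {V : Type} [Fintype V] (G : EOGraph V) (v : V) : Prop :=
  ∀ e ∈ G.graph.edgeSet, ∀ f ∈ G.graph.edgeSet, ∀ g ∈ G.graph.edgeSet,
    v ∈ e → v ∈ g → G.label e ≤ G.label f → G.label f ≤ G.label g → v ∈ f

/-- An edge-ordered bigraph: an edge-ordered graph with a proper 2-coloring of the
vertices into left (`false`) and right (`true`) vertices. -/
structure EOBigraph (V : Type) [Fintype V] where
  toEOGraph : EOGraph V
  side : V → Bool
  proper : ∀ u v, toEOGraph.graph.Adj u v → side u ≠ side v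

/-- A right caterpillar: an edge-ordered bigraph whose underlying edge-ordered graph is a
semi-caterpillar and all of whose right vertices are close. -/
def IsRightCaterpillar {V : Type} [Fintype V] (B : EOBigraph V) : Prop :=
  IsSemiCaterpillar B.toEOGraph ∧ ∀ v, B.side v = true → CloseVertex B.toEOGraph v

/-- Containment of edge-ordered bigraphs: additionally sides must be preserved. -/
def BContains {V W : Type} [Fintype V] [Fintype W] (G : EOBigraph V) (H : EOBigraph W) : Prop :=
  ∃ f : W → V, Function.Injective f ∧
    (∀ a b, H.toEOGraph.graph.Adj a b → G.toEOGraph.graph.Adj (f a) (f b)) ∧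
    (∀ e ∈ H.toEOGraph.graph.edgeSet, ∀ e' ∈ H.toEOGraph.graph.edgeSet,
      H.toEOGraph.label e < H.toEOGraph.label e' →
        G.toEOGraph.label (Sym2.map f e) < G.toEOGraph.label (Sym2.map f e')) ∧
    ∀ a, G.side (f a) = H.side a

/-- Isomorphism of edge-ordered bigraphs. -/
def BIsoTo {V W : Type} [Fintype W] [Fintype V] (H : EOBigraph W) (G : EOBigraph V) : Prop :=
  ∃ f : W ≃ V, (∀ a b, H.toEOGraph.graph.Adj a b ↔ G.toEOGraph.graph.Adj (f a) (f b)) ∧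
    (∀ e ∈ H.toEOGraph.graph.edgeSet, ∀ e' ∈ H.toEOGraph.graph.edgeSet,
      (H.toEOGraph.label e < H.toEOGraph.label e' ↔
        G.toEOGraph.label (Sym2.map f e) < G.toEOGraph.label (Sym2.map f e'))) ∧
    ∀ a, G.side (f a) = H.side a

/-- Isomorphism of edge-ordered graphs. -/
def EOIsoTo {V W : Type} [Fintype W] [Fintype V] (H : EOGraph W) (G : EOGraph V) : Prop :=
  ∃ f : W ≃ V, (∀ a b, H.graph.Adj a b ↔ G.graph.Adj (f a) (f b)) ∧
    ∀ e ∈ H.graph.edgeSet, ∀ e' ∈ H.graph.edgeSet,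
      (H.label e < H.label e' ↔ G.label (Sym2.map f e) < G.label (Sym2.map f e'))

/-- The labeling of the path graph on `Fin k` in which the edge `{i, i+1}` gets label `w i`. -/
def pathLabel {k : ℕ} (w : Fin k → ℝ) : Sym2 (Fin k) → ℝ :=
  Sym2.lift ⟨fun i j => w (min i j), fun i j => by simp [min_comm]⟩

lemma pathGraph_edge_form {k : ℕ} {e : Sym2 (Fin k)}
    (he : e ∈ (SimpleGraph.pathGraph k).edgeSet) :
    ∃ i j : Fin k, e = s(i, j) ∧ (i : ℕ) + 1 = (j : ℕ) := by
  induction e using Sym2.inductionOn with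
  | hf a b =>
    rw [SimpleGraph.mem_edgeSet, SimpleGraph.pathGraph_adj] at he
    rcases he with h | h
    · exact ⟨a, b, rfl, h⟩
    · exact ⟨b, a, Sym2.eq_swap, h⟩

/-- The edge-ordered path on `k` vertices whose edge labels, listed along the path,
are `w 0, w 1, …, w (k-2)`. -/
def pathEO (k : ℕ) (w : Fin k → ℝ) (hw : Function.Injective w) : EOGraph (Fin k) where
  graph := SimpleGraph.pathGraph k
  label := pathLabel w
  inj := by
    intro e he f hf hef
    obtain ⟨i, j, rfl, hij⟩ := pathGraph_edge_form he
    obtain ⟨i', j', rfl, hij'⟩ := pathGraph_edge_form hf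
    have h1 : min i j = i := min_eq_left (Fin.le_def.mpr (by omega))
    have h2 : min i' j' = i' := min_eq_left (Fin.le_def.mpr (by omega))
    simp only [pathLabel, Sym2.lift_mk] at hef
    rw [h1, h2] at hef
    have hii : i = i' := hw hef
    have hjj : j = j' := Fin.ext (by omega)
    rw [hii, hjj]

/-- The edge-ordered path with natural-number labels. -/
def pathEON (k : ℕ) (v : Fin k → ℕ) (hv : Function.Injective v) : EOGraph (Fin k) :=
  pathEO k (fun i => (v i : ℝ)) (fun a b h => hv (Nat.cast_injective h))

/-- The bipartition of the edge-ordered path `pathEON k v hv`; the starting vertex is a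
right vertex iff `startRight` holds (right = `true`, left = `false`). -/
def pathEOBig (k : ℕ) (v : Fin k → ℕ) (hv : Function.Injective v) (startRight : Bool) :
    EOBigraph (Fin k) where
  toEOGraph := pathEON k v hv
  side := fun i => if i.val % 2 = 0 then startRight else !startRight
  proper := by
    intro a b hab
    have h : (SimpleGraph.pathGraph k).Adj a b := hab
    rw [SimpleGraph.pathGraph_adj] at h
    have hpar : (a.val % 2 = 0) ↔ ¬ (b.val % 2 = 0) := by omega
    by_cases ha : a.val % 2 = 0 <;> by_cases hb : b.val % 2 = 0 <;>
      simp_all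

def P4_213 : EOGraph (Fin 4) := pathEON 4 ![2,1,3,0] (by decide)
def P5_1342 : EOGraph (Fin 5) := pathEON 5 ![1,3,4,2,0] (by decide)
def P5_1432 : EOGraph (Fin 5) := pathEON 5 ![1,4,3,2,0] (by decide)
def P6_13254 : EOGraph (Fin 6) := pathEON 6 ![1,3,2,5,4,0] (by decide)
def P6_21354 : EOGraph (Fin 6) := pathEON 6 ![2,1,3,5,4,0] (by decide)
def P6plus_13254 : EOBigraph (Fin 6) := pathEOBig 6 ![1,3,2,5,4,0] (by decide) true
def P6minus_13254 : EOBigraph (Fin 6) := pathEOBig 6 ![1,3,2,5,4,0] (by decide) false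
def P5plus_2143 : EOBigraph (Fin 5) := pathEOBig 5 ![2,1,4,3,0] (by decide) true
def P5minus_2143 : EOBigraph (Fin 5) := pathEOBig 5 ![2,1,4,3,0] (by decide) false

/-- `B'` is an extension of `B`: it is obtained by adding new edges, each connecting an end
of the smallest edge `s(x,y)` of `B` to a new degree-1 vertex, all new edges being smaller
than `s(x,y)`, and all new edges at the left end being smaller than those at the right end. -/
def IsExtensionOf {V' V : Type} [Fintype V'] [Fintype V]
    (B' : EOBigraph V') (B : EOBigraph V) : Prop :=
  ∃ (ι : V → V') (x y : V),
    Function.Injective ι ∧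
    B.toEOGraph.graph.Adj x y ∧ B.side x = false ∧ B.side y = true ∧
    (∀ e ∈ B.toEOGraph.graph.edgeSet, B.toEOGraph.label s(x, y) ≤ B.toEOGraph.label e) ∧
    (∀ a b, B.toEOGraph.graph.Adj a b ↔ B'.toEOGraph.graph.Adj (ι a) (ι b)) ∧
    (∀ a, B'.side (ι a) = B.side a) ∧
    (∀ e ∈ B.toEOGraph.graph.edgeSet, ∀ f ∈ B.toEOGraph.graph.edgeSet,
      (B.toEOGraph.label e < B.toEOGraph.label f ↔
        B'.toEOGraph.label (Sym2.map ι e) < B'.toEOGraph.label (Sym2.map ι f))) ∧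
    (∀ w : V', w ∉ Set.range ι →
      (∃! u, B'.toEOGraph.graph.Adj w u) ∧
      (∀ u, B'.toEOGraph.graph.Adj w u → (u = ι x ∨ u = ι y) ∧
        B'.toEOGraph.label s(w, u) < B'.toEOGraph.label s(ι x, ι y))) ∧
    (∀ w w' : V', w ∉ Set.range ι → w' ∉ Set.range ι →
      B'.toEOGraph.graph.Adj w (ι x) → B'.toEOGraph.graph.Adj w' (ι y) →
      B'.toEOGraph.label s(w, ι x) < B'.toEOGraph.label s(w', ι y))

/-- A bundled edge-ordered bigraph (on some `Fin n`). -/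
structure BundledBigraph where
  n : ℕ
  big : EOBigraph (Fin n)

/-- `B` is (isomorphic to) `T₀`, the edge-ordered bigraph with one edge and two vertices. -/
def IsT0 {V : Type} [Fintype V] (B : EOBigraph V) : Prop :=
  Fintype.card V = 2 ∧ ∀ u v : V, u ≠ v → B.toEOGraph.graph.Adj u v

/-- `B` can be obtained (up to isomorphism) from `T₀` by a sequence of `i` extensions. -/
def ReachedInSteps {V : Type} [Fintype V] (i : ℕ) (B : EOBigraph V) : Prop :=
  ∃ f : ℕ → BundledBigraph, IsT0 (f 0).big ∧ BIsoTo (f i).big B ∧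
    ∀ j < i, IsExtensionOf (f (j+1)).big (f j).big

/-- The recursive depth of a right caterpillar: the minimum number of extension steps
needed to obtain it from `T₀`. -/
def HasRecursiveDepth {V : Type} [Fintype V] (B : EOBigraph V) (i : ℕ) : Prop :=
  ReachedInSteps i B ∧ ∀ j < i, ¬ ReachedInSteps j B

/-- An edge `e` (with left end `x` and right end `y`) is `c`-left-leaning: there are `c` edges
at `x` and `c` edges at `y` with every edge of the latter set larger than every edge of the
former, but smaller than `e`. -/
def LeftLeaning {V : Type} [Fintype V] (c : ℕ) (G : EOBigraph V) (e : Sym2 V) : Prop :=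
  ∃ x y : V, e = s(x, y) ∧ e ∈ G.toEOGraph.graph.edgeSet ∧
    G.side x = false ∧ G.side y = true ∧
    ∃ S S' : Finset (Sym2 V), S.card = c ∧ S'.card = c ∧
      (∀ f ∈ S, f ∈ G.toEOGraph.graph.edgeSet ∧ x ∈ f) ∧
      (∀ f ∈ S', f ∈ G.toEOGraph.graph.edgeSet ∧ y ∈ f) ∧
      (∀ f ∈ S, ∀ f' ∈ S', G.toEOGraph.label f < G.toEOGraph.label f') ∧
      (∀ f' ∈ S', G.toEOGraph.label f' < G.toEOGraph.label e)

/-- An edge `e` (with left end `x` and right end `y`) is `c`-right-leaning. -/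
def RightLeaning {V : Type} [Fintype V] (c : ℕ) (G : EOBigraph V) (e : Sym2 V) : Prop :=
  ∃ x y : V, e = s(x, y) ∧ e ∈ G.toEOGraph.graph.edgeSet ∧
    G.side x = false ∧ G.side y = true ∧
    ∃ S S' : Finset (Sym2 V), S.card = c ∧ S'.card = c ∧
      (∀ f ∈ S, f ∈ G.toEOGraph.graph.edgeSet ∧ x ∈ f) ∧
      (∀ f ∈ S', f ∈ G.toEOGraph.graph.edgeSet ∧ y ∈ f) ∧
      (∀ f' ∈ S', ∀ f ∈ S, G.toEOGraph.label f' < G.toEOGraph.label f) ∧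
      (∀ f ∈ S, G.toEOGraph.label f < G.toEOGraph.label e)

/-- The spanning sub-bigraph of `G` consisting of the edges satisfying `P`. -/
def bigraphRestrict {V : Type} [Fintype V] (G : EOBigraph V) (P : Sym2 V → Prop) :
    EOBigraph V where
  toEOGraph :=
    { graph := SimpleGraph.fromEdgeSet {e | e ∈ G.toEOGraph.graph.edgeSet ∧ P e}
      label := G.toEOGraph.label
      inj := by
        intro e he f hf h
        rw [SimpleGraph.edgeSet_fromEdgeSet] at he hf
        exact G.toEOGraph.inj e he.1.1 f hf.1.1 h }
  side := G.side
  proper := by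
    intro u v huv
    rw [SimpleGraph.fromEdgeSet_adj] at huv
    have h1 : s(u, v) ∈ G.toEOGraph.graph.edgeSet := huv.1.1
    exact G.proper u v ((SimpleGraph.mem_edgeSet _).mp h1)

/-- The spanning subgraph of the `c`-left-leaning edges. -/
def leftSub {V : Type} [Fintype V] (c : ℕ) (G : EOBigraph V) : EOBigraph V :=
  bigraphRestrict G (LeftLeaning c G)

/-- The spanning subgraph of the `c`-right-leaning edges. -/
def rightSub {V : Type} [Fintype V] (c : ℕ) (G : EOBigraph V) : EOBigraph V :=
  bigraphRestrict G (RightLeaning c G)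

/-- `G^{c-left}_i`: iteratively keep only `c`-left-leaning edges, `i` times. -/
def leftIter {V : Type} [Fintype V] (c i : ℕ) (G : EOBigraph V) : EOBigraph V :=
  (leftSub c)^[i] G

/-- `G^{c-right}_i`: iteratively keep only `c`-right-leaning edges, `i` times. -/
def rightIter {V : Type} [Fintype V] (c i : ℕ) (G : EOBigraph V) : EOBigraph V :=
  (rightSub c)^[i] G

/-- The set of labels of edges incident to `v`. -/
def incidentLabels {V : Type} [Fintype V] (G : EOGraph V) (v : V) : Set ℝ :=
  G.label '' {e | e ∈ G.graph.edgeSet ∧ v ∈ e}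

/-- The vertex label `l(v)`: the second smallest label among the edges incident to `v`
(meaningful when `v` has degree at least 2). -/
noncomputable def secondLabel {V : Type} [Fintype V] (G : EOGraph V) (v : V) : ℝ :=
  sInf (incidentLabels G v \ {sInf (incidentLabels G v)})

/-- `v` has degree at least 2. -/
def DegTwo {V : Type} [Fintype V] (G : EOGraph V) (v : V) : Prop :=
  2 ≤ {e | e ∈ G.graph.edgeSet ∧ v ∈ e}.ncard

/-- An edge `xy` (left end `x`, right end `y`) is left inclined if `l(x) < l(y) ≤ L(xy)`. -/
def LeftInclined {V : Type} [Fintype V] (G : EOBigraph V) (e : Sym2 V) : Prop :=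
  ∃ x y : V, e = s(x, y) ∧ e ∈ G.toEOGraph.graph.edgeSet ∧
    G.side x = false ∧ G.side y = true ∧
    DegTwo G.toEOGraph x ∧ DegTwo G.toEOGraph y ∧
    secondLabel G.toEOGraph x < secondLabel G.toEOGraph y ∧
    secondLabel G.toEOGraph y ≤ G.toEOGraph.label e

/-- An edge `xy` (left end `x`, right end `y`) is right inclined if `l(y) < l(x) ≤ L(xy)`. -/
def RightInclined {V : Type} [Fintype V] (G : EOBigraph V) (e : Sym2 V) : Prop :=
  ∃ x y : V, e = s(x, y) ∧ e ∈ G.toEOGraph.graph.edgeSet ∧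
    G.side x = false ∧ G.side y = true ∧
    DegTwo G.toEOGraph x ∧ DegTwo G.toEOGraph y ∧
    secondLabel G.toEOGraph y < secondLabel G.toEOGraph x ∧
    secondLabel G.toEOGraph x ≤ G.toEOGraph.label e

/-- `G_l`: the spanning sub-bigraph of the left inclined edges of `G`. -/
def inclinedLeftSub {V : Type} [Fintype V] (G : EOBigraph V) : EOBigraph V :=
  bigraphRestrict G (LeftInclined G)

/-- `G_r`: the spanning sub-bigraph of the right inclined edges of `G`. -/
def inclinedRightSub {V : Type} [Fintype V] (G : EOBigraph V) : EOBigraph V :=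
  bigraphRestrict G (RightInclined G)

/-- The underlying simple graph of `P` is a path. -/
def IsPathEO {V : Type} [Fintype V] (P : EOGraph V) : Prop :=
  ∃ (k : ℕ) (f : V ≃ Fin k), ∀ a b, P.graph.Adj a b ↔ (SimpleGraph.pathGraph k).Adj (f a) (f b)

/-- A monotone path: the labels increase (or decrease) monotonically along the path. -/
def IsMonotonePath {V : Type} [Fintype V] (P : EOGraph V) : Prop :=
  ∃ (k : ℕ) (w : Fin k → ℝ) (hw : Function.Injective w),
    (StrictMono w ∨ StrictAnti w) ∧ EOIsoTo (pathEO k w hw) P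

/-- A flipped path: obtained from a monotone path (with at least 3 edges) by swapping
either the two smallest or the two largest labels. -/
def IsFlippedPath {V : Type} [Fintype V] (P : EOGraph V) : Prop :=
  ∃ (k : ℕ) (hk : 4 ≤ k) (w : Fin k → ℝ) (hw : StrictMono w),
    EOIsoTo (pathEO k (w ∘ (Equiv.swap (⟨0, by omega⟩ : Fin k) ⟨1, by omega⟩))
      (hw.injective.comp (Equiv.injective _))) P ∨
    EOIsoTo (pathEO k (w ∘ (Equiv.swap (⟨k-3, by omega⟩ : Fin k) ⟨k-2, by omega⟩))
      (hw.injective.comp (Equiv.injective _))) P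

/-- 0-1 matrix containment: `A` contains `B` if `B` can be obtained from a submatrix of `A`
by possibly changing some 1 entries to 0. -/
def MContains {m n p q : ℕ} (A : Fin m → Fin n → Bool) (B : Fin p → Fin q → Bool) : Prop :=
  ∃ (r : Fin p → Fin m) (c : Fin q → Fin n), StrictMono r ∧ StrictMono c ∧
    ∀ i j, B i j = true → A (r i) (c j) = true

/-- The extremal function of a 0-1 matrix `B`: the maximum number of 1 entries in an
`n × n` 0-1 matrix avoiding `B`. -/
noncomputable def mex {p q : ℕ} (n : ℕ) (B : Fin p → Fin q → Bool) : ℕ :=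
  sSup {k | ∃ A : Fin n → Fin n → Bool, ¬ MContains A B ∧
    k = (Finset.univ.filter fun ij : Fin n × Fin n => A ij.1 ij.2 = true).card}

/-- The staircase with positions `p 0, …, p t` describes the matrix `A`. -/
def DescribedBy {nr nc : ℕ} (A : Fin nr → Fin nc → Bool) (t : ℕ)
    (p : Fin (t + 1) → Fin nr × Fin nc) : Prop :=
  (∀ k : Fin t,
      ((p k.succ).1.val = (p k.castSucc).1.val + 1 ∧ (p k.succ).2 = (p k.castSucc).2) ∨
      ((p k.succ).1 = (p k.castSucc).1 ∧ (p k.succ).2.val = (p k.castSucc).2.val + 1)) ∧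
  ∀ i j, A i j = true ↔
    ((∃ k, p k = (i, j)) ∨
     (i = (p 0).1 ∧ j < (p 0).2) ∨ (j = (p 0).2 ∧ i < (p 0).1) ∨
     (i = (p (Fin.last t)).1 ∧ (p (Fin.last t)).2 < j) ∨
     (j = (p (Fin.last t)).2 ∧ (p (Fin.last t)).1 < i))

/-- A staircase matrix: `A`, or `A` with the order of its columns reversed, is described
by a staircase. -/
def IsStaircaseMatrix {nr nc : ℕ} (A : Fin nr → Fin nc → Bool) : Prop :=
  (∃ t p, DescribedBy A t p) ∨ (∃ t p, DescribedBy (fun i j => A i j.rev) t p)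

/-- The bipartite graph whose bipartite adjacency matrix is `A`. -/
def MatrixGraph {nr nc : ℕ} (A : Fin nr → Fin nc → Bool) : SimpleGraph (Fin nr ⊕ Fin nc) :=
  SimpleGraph.fromRel fun u v =>
    match u, v with
    | .inl i, .inr j => A i j = true
    | _, _ => False

/-- A connected 0-1 matrix: the bipartite adjacency matrix of a connected graph. -/
def IsConnectedMatrix {nr nc : ℕ} (A : Fin nr → Fin nc → Bool) : Prop :=
  (MatrixGraph A).Connected


lemma two_small {V : Type} [Fintype V] (G : EOGraph V) (v : V) (h : DegTwo G v) :
    ∃ e1 e2 : Sym2 V, e1 ∈ G.graph.edgeSet ∧ e2 ∈ G.graph.edgeSet ∧ v ∈ e1 ∧ v ∈ e2 ∧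
      e1 ≠ e2 ∧ G.label e1 < secondLabel G v ∧ G.label e2 = secondLabel G v := by
  classical
  set S : Set (Sym2 V) := {e | e ∈ G.graph.edgeSet ∧ v ∈ e} with hS
  have hSfin : S.Finite := Set.toFinite S
  have hS2 : 2 ≤ S.ncard := h
  have hinj : Set.InjOn G.label S := fun a ha b hb hab => G.inj a ha.1 b hb.1 hab
  have hTim : incidentLabels G v = G.label '' S := rfl
  have hTfin : (incidentLabels G v).Finite := hTim ▸ hSfin.image _
  have hT2 : 2 ≤ (incidentLabels G v).ncard := by
    rw [hTim, Set.ncard_image_of_injOn hinj]; exact hS2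
  have hTne : (incidentLabels G v).Nonempty := by
    rw [← Set.ncard_pos hTfin]; omega
  have hm : sInf (incidentLabels G v) ∈ incidentLabels G v := hTne.csInf_mem hTfin
  have hT'ne : (incidentLabels G v \ {sInf (incidentLabels G v)}).Nonempty := by
    rw [← Set.ncard_pos hTfin.diff]
    rw [Set.ncard_diff_singleton_of_mem hm]
    omega
  have hs : secondLabel G v ∈ incidentLabels G v \ {sInf (incidentLabels G v)} :=
    hT'ne.csInf_mem hTfin.diff
  have hlt : sInf (incidentLabels G v) < secondLabel G v := by
    have h1 : sInf (incidentLabels G v) ≤ secondLabel G v := csInf_le hTfin.bddBelow hs.1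
    have h2 : sInf (incidentLabels G v) ≠ secondLabel G v := fun he => hs.2 he.symm
    exact lt_of_le_of_ne h1 h2
  obtain ⟨e1, he1, hle1⟩ := hm
  obtain ⟨e2, he2, hle2⟩ := hs.1
  exact ⟨e1, e2, he1.1, he2.1, he1.2, he2.2,
    fun he => by rw [he, hle2] at hle1; exact hlt.ne' hle1,
    hle1 ▸ hlt, hle2⟩


lemma pathGraph6_edges {e : Sym2 (Fin 6)} (he : e ∈ (SimpleGraph.pathGraph 6).edgeSet) :
    e = s(0,1) ∨ e = s(1,2) ∨ e = s(2,3) ∨ e = s(3,4) ∨ e = s(4,5) := by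
  obtain ⟨i,j,rfl,hij⟩ := pathGraph_edge_form he
  have hi : i.val < 5 := by omega
  clear he hi
  revert hij
  fin_cases i <;> fin_cases j <;> decide


/-- If an edge-ordered bigraph `G` avoids `P₆^{+13254}`, then the spanning
subgraph `G_l` of its left inclined edges avoids `P₅^{-2143}`. -/
theorem stmt_15 {V : Type} [Fintype V] (G : EOBigraph V) (h : ¬ BContains G P6plus_13254) :
    ¬ BContains (inclinedLeftSub G) P5minus_2143 := by
  classical
  intro hc
  apply h
  obtain ⟨f, hfinj, hadj, hord, hside⟩ := hc
  have hs0 : G.side (f 0) = false := by simpa [P5minus_2143, pathEOBig, inclinedLeftSub, bigraphRestrict] using hside 0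
  have hs1 : G.side (f 1) = true := by simpa [P5minus_2143, pathEOBig, inclinedLeftSub, bigraphRestrict] using hside 1
  have hs2 : G.side (f 2) = false := by simpa [P5minus_2143, pathEOBig, inclinedLeftSub, bigraphRestrict] using hside 2
  have hs3 : G.side (f 3) = true := by simpa [P5minus_2143, pathEOBig, inclinedLeftSub, bigraphRestrict] using hside 3
  have hs4 : G.side (f 4) = false := by simpa [P5minus_2143, pathEOBig, inclinedLeftSub, bigraphRestrict] using hside 4
  have hE : ∀ a b : Fin 5, (SimpleGraph.pathGraph 5).Adj a b →
      s(f a, f b) ∈ G.toEOGraph.graph.edgeSet ∧ LeftInclined G s(f a, f b) := by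
    intro a b hab
    have h2 := hadj a b hab
    simp only [inclinedLeftSub, bigraphRestrict, SimpleGraph.fromEdgeSet_adj,
      Set.mem_setOf_eq] at h2
    exact ⟨h2.1.1, h2.1.2⟩
  have e01 := hE 0 1 (by rw [SimpleGraph.pathGraph_adj]; decide)
  have e12 := hE 1 2 (by rw [SimpleGraph.pathGraph_adj]; decide)
  have e23 := hE 2 3 (by rw [SimpleGraph.pathGraph_adj]; decide)
  have e34 := hE 3 4 (by rw [SimpleGraph.pathGraph_adj]; decide)
  -- unpack left-inclinedness of edge 01
  obtain ⟨x, y, hxy, _, hsx, hsy, hdx, hdy, hlxy, hley⟩ := e01.2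
  rw [Sym2.eq_iff] at hxy
  rcases hxy with ⟨h1, h2⟩ | ⟨h1, h2⟩
  swap
  · exfalso; rw [h2, hsx] at hs1; exact absurd hs1 (by simp)
  subst h1; subst h2
  -- unpack left-inclinedness of edge 12
  obtain ⟨x, y, hxy2, _, hsx2, hsy2, _, _, _, hley2⟩ := e12.2
  rw [Sym2.eq_iff] at hxy2
  rcases hxy2 with ⟨h1, h2⟩ | ⟨h1, h2⟩
  · exfalso; rw [h1, hsx2] at hs1; exact absurd hs1 (by simp)
  subst h1; subst h2
  -- order facts from the P5 copy
  have adjmem : ∀ a b : Fin 5, (SimpleGraph.pathGraph 5).Adj a b →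
      s(a, b) ∈ P5minus_2143.toEOGraph.graph.edgeSet := fun a b hab => hab
  have o21 : G.toEOGraph.label s(f 1, f 2) < G.toEOGraph.label s(f 0, f 1) := by
    have := hord s((1:Fin 5),2)
      (adjmem _ _ (by rw [SimpleGraph.pathGraph_adj]; decide))
      s((0:Fin 5),1)
      (adjmem _ _ (by rw [SimpleGraph.pathGraph_adj]; decide))
      (by norm_num [P5minus_2143, pathEOBig, pathEON, pathEO, pathLabel]; decide)
    simpa [Sym2.map_pair_eq, inclinedLeftSub, bigraphRestrict] using this
  have o13 : G.toEOGraph.label s(f 0, f 1) < G.toEOGraph.label s(f 3, f 4) := by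
    have := hord s((0:Fin 5),1)
      (adjmem _ _ (by rw [SimpleGraph.pathGraph_adj]; decide))
      s((3:Fin 5),4)
      (adjmem _ _ (by rw [SimpleGraph.pathGraph_adj]; decide))
      (by norm_num [P5minus_2143, pathEOBig, pathEON, pathEO, pathLabel]; decide)
    simpa [Sym2.map_pair_eq, inclinedLeftSub, bigraphRestrict] using this
  have o34 : G.toEOGraph.label s(f 3, f 4) < G.toEOGraph.label s(f 2, f 3) := by
    have := hord s((3:Fin 5),4)
      (adjmem _ _ (by rw [SimpleGraph.pathGraph_adj]; decide))
      s((2:Fin 5),3)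
      (adjmem _ _ (by rw [SimpleGraph.pathGraph_adj]; decide))
      (by norm_num [P5minus_2143, pathEOBig, pathEON, pathEO, pathLabel]; decide)
    simpa [Sym2.map_pair_eq, inclinedLeftSub, bigraphRestrict] using this
  -- two small edges at f 0
  obtain ⟨e1, e2, he1m, he2m, hv1, hv2, hne12, hl1, hl2⟩ := two_small G.toEOGraph (f 0) hdx
  obtain ⟨w1, rfl⟩ := Sym2.mem_iff_exists.mp hv1
  obtain ⟨w2, rfl⟩ := Sym2.mem_iff_exists.mp hv2
  have hw12 : w1 ≠ w2 := fun hww => hne12 (by rw [hww])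
  have key : ∃ w, w ≠ f 3 ∧ s(f 0, w) ∈ G.toEOGraph.graph.edgeSet ∧
      G.toEOGraph.label s(f 0, w) ≤ secondLabel G.toEOGraph (f 0) := by
    by_cases hw : w1 = f 3
    · exact ⟨w2, by rw [← hw]; exact hw12.symm, he2m, le_of_eq hl2⟩
    · exact ⟨w1, hw, he1m, le_of_lt hl1⟩
  obtain ⟨w, hwf3, hgm, hgle⟩ := key
  have hadj0w : G.toEOGraph.graph.Adj (f 0) w := (SimpleGraph.mem_edgeSet _).mp hgm
  have hwside : G.side w = true := by
    have hp := G.proper (f 0) w hadj0w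
    rw [hs0] at hp
    cases hb : G.side w
    · exact absurd hb.symm hp
    · rfl
  have hw0 : w ≠ f 0 := hadj0w.ne'
  have hw1f : w ≠ f 1 := by
    intro hh; rw [hh] at hgle; linarith
  have hw2f : w ≠ f 2 := by
    intro hh; rw [hh, hs2] at hwside; exact absurd hwside (by simp)
  have hw4f : w ≠ f 4 := by
    intro hh; rw [hh, hs4] at hwside; exact absurd hwside (by simp)
  have hgle' : G.toEOGraph.label s(w, f 0) ≤ secondLabel G.toEOGraph (f 0) := by
    rw [Sym2.eq_swap]; exact hgle
  -- adjacency facts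
  have A0 : G.toEOGraph.graph.Adj w (f 0) := hadj0w.symm
  have A1 : G.toEOGraph.graph.Adj (f 0) (f 1) := (SimpleGraph.mem_edgeSet _).mp e01.1
  have A2 : G.toEOGraph.graph.Adj (f 1) (f 2) := (SimpleGraph.mem_edgeSet _).mp e12.1
  have A3 : G.toEOGraph.graph.Adj (f 2) (f 3) := (SimpleGraph.mem_edgeSet _).mp e23.1
  have A4 : G.toEOGraph.graph.Adj (f 3) (f 4) := (SimpleGraph.mem_edgeSet _).mp e34.1
  -- the order chain
  have C01 : G.toEOGraph.label s(w, f 0) < G.toEOGraph.label s(f 1, f 2) := by linarith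
  have C12 : G.toEOGraph.label s(f 1, f 2) < G.toEOGraph.label s(f 0, f 1) := o21
  have C23 : G.toEOGraph.label s(f 0, f 1) < G.toEOGraph.label s(f 3, f 4) := o13
  have C34 : G.toEOGraph.label s(f 3, f 4) < G.toEOGraph.label s(f 2, f 3) := o34
  have hfne : ∀ i j : Fin 5, i ≠ j → f i ≠ f j := fun i j hij hfij => hij (hfinj hfij)
  have f01 : f 0 ≠ f 1 := hfne 0 1 (by decide)
  have f02 : f 0 ≠ f 2 := hfne 0 2 (by decide)
  have f03 : f 0 ≠ f 3 := hfne 0 3 (by decide)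
  have f04 : f 0 ≠ f 4 := hfne 0 4 (by decide)
  have f12 : f 1 ≠ f 2 := hfne 1 2 (by decide)
  have f13 : f 1 ≠ f 3 := hfne 1 3 (by decide)
  have f14 : f 1 ≠ f 4 := hfne 1 4 (by decide)
  have f23 : f 2 ≠ f 3 := hfne 2 3 (by decide)
  have f24 : f 2 ≠ f 4 := hfne 2 4 (by decide)
  have f34 : f 3 ≠ f 4 := hfne 3 4 (by decide)
  -- label values of P6plus_13254
  have L01 : P6plus_13254.toEOGraph.label s((0:Fin 6),1) = (1:ℝ) := by
    show (((![1,3,2,5,4,0] : Fin 6 → ℕ) ((0:Fin 6) ⊓ 1) : ℕ) : ℝ) = 1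
    norm_num [show ((0:Fin 6) ⊓ 1) = 0 from rfl]
  have L12 : P6plus_13254.toEOGraph.label s((1:Fin 6),2) = (3:ℝ) := by
    show (((![1,3,2,5,4,0] : Fin 6 → ℕ) ((1:Fin 6) ⊓ 2) : ℕ) : ℝ) = 3
    norm_num [show ((1:Fin 6) ⊓ 2) = 1 from rfl]
  have L23 : P6plus_13254.toEOGraph.label s((2:Fin 6),3) = (2:ℝ) := by
    show (((![1,3,2,5,4,0] : Fin 6 → ℕ) ((2:Fin 6) ⊓ 3) : ℕ) : ℝ) = 2
    norm_num [show ((2:Fin 6) ⊓ 3) = 2 from rfl, show ((![1,3,2,5,4,0] : Fin 6 → ℕ) 2) = 2 from rfl]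
  have L34 : P6plus_13254.toEOGraph.label s((3:Fin 6),4) = (5:ℝ) := by
    show (((![1,3,2,5,4,0] : Fin 6 → ℕ) ((3:Fin 6) ⊓ 4) : ℕ) : ℝ) = 5
    norm_num [show ((3:Fin 6) ⊓ 4) = 3 from rfl, show ((![1,3,2,5,4,0] : Fin 6 → ℕ) 3) = 5 from rfl]
  have L45 : P6plus_13254.toEOGraph.label s((4:Fin 6),5) = (4:ℝ) := by
    show (((![1,3,2,5,4,0] : Fin 6 → ℕ) ((4:Fin 6) ⊓ 5) : ℕ) : ℝ) = 4
    norm_num [show ((4:Fin 6) ⊓ 5) = 4 from rfl, show ((![1,3,2,5,4,0] : Fin 6 → ℕ) 4) = 4 from rfl]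
  refine ⟨![w, f 0, f 1, f 2, f 3, f 4], ?_, ?_, ?_, ?_⟩
  · -- injectivity
    have nes : ∀ i : Fin 5, w ≠ f i := by
      intro i; fin_cases i
      exacts [hw0, hw1f, hw2f, hwf3, hw4f]
    intro a b hab
    fin_cases a <;> fin_cases b <;>
      first
        | rfl
        | exact absurd hab (nes 0) | exact absurd hab (nes 1) | exact absurd hab (nes 2)
        | exact absurd hab (nes 3) | exact absurd hab (nes 4)
        | exact absurd hab (nes 0).symm | exact absurd hab (nes 1).symm
        | exact absurd hab (nes 2).symm | exact absurd hab (nes 3).symm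
        | exact absurd hab (nes 4).symm
        | exact absurd hab f01 | exact absurd hab f02 | exact absurd hab f03 | exact absurd hab f04
        | exact absurd hab f12 | exact absurd hab f13 | exact absurd hab f14
        | exact absurd hab f23 | exact absurd hab f24 | exact absurd hab f34
        | exact absurd hab f01.symm | exact absurd hab f02.symm | exact absurd hab f03.symm
        | exact absurd hab f04.symm | exact absurd hab f12.symm | exact absurd hab f13.symm
        | exact absurd hab f14.symm | exact absurd hab f23.symm | exact absurd hab f24.symm
        | exact absurd hab f34.symm
  · -- adjacency
    intro a b hab
    have hmem : s(a, b) ∈ (SimpleGraph.pathGraph 6).edgeSet := hab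
    rcases pathGraph6_edges hmem with he | he | he | he | he <;>
      rw [Sym2.eq_iff] at he <;>
      rcases he with ⟨rfl, rfl⟩ | ⟨rfl, rfl⟩
    exacts [A0, A0.symm, A1, A1.symm, A2, A2.symm, A3, A3.symm, A4, A4.symm]
  · -- order
    intro e he e' he' hlt
    rcases pathGraph6_edges he with rfl | rfl | rfl | rfl | rfl <;>
      rcases pathGraph6_edges he' with rfl | rfl | rfl | rfl | rfl <;>
      simp only [L01, L12, L23, L34, L45] at hlt <;>
      norm_num at hlt <;>
      simp only [Sym2.map_pair_eq] <;>
      first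
        | exact C01
        | exact C12
        | exact C23
        | exact C34
        | exact C01.trans C12
        | exact C12.trans C23
        | exact C23.trans C34
        | exact (C01.trans C12).trans C23
        | exact (C12.trans C23).trans C34
        | exact ((C01.trans C12).trans C23).trans C34
  · -- sides
    intro a
    fin_cases a
    · exact hwside
    · exact hs0
    · exact hs1
    · exact hs2
    · exact hs3
    · exact hs4
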